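/- Let n ≥ 2, ε ∈ (0,1/2), c > 0, δ ∈ ℝ, p, q ∈ (0,1) with p < (q(1+2ε) + 4c(ε−δ))/(1−2ε). Consider a voter i in the minority class H₂ (|H₂| = n(1/2−ε)), with edges to each other member of H₂ independently with probability p and to each member of H₁ independently with probability q. The voter predicts a₂ iff N_{i,2} − N_{i,1} ≥ 2cn(ε−δ) − 1. Then for all sufficiently large n, P(voter i predicts a₂) ≤ exp(−2√(n−1)). -/

import Mathlib

open MeasureTheory ProbabilityTheory Finset


lemma binom_sum_eq (M : ℕ) (x y : ℝ) :
    ∑ k ∈ Finset.range (M+1), (M.choose k : ℝ) * x^k * y^(M-k) = (x+y)^M := by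
  rw [add_pow]
  exact Finset.sum_congr rfl (fun k _ => by ring)

lemma sum_binom_le (M : ℕ) (x y : ℝ) (hx : 0 ≤ x) (hy : 0 ≤ y) (S : Finset ℕ) :
    ∑ k ∈ S, (M.choose k : ℝ) * x^k * y^(M-k) ≤ (x+y)^M := by
  rw [← binom_sum_eq M x y]
  have h1 : ∑ k ∈ S, (M.choose k : ℝ) * x^k * y^(M-k)
      ≤ ∑ k ∈ S ∪ Finset.range (M+1), (M.choose k : ℝ) * x^k * y^(M-k) :=
    Finset.sum_le_sum_of_subset_of_nonneg Finset.subset_union_left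
      (fun k _ _ => by positivity)
  have h2 : ∑ k ∈ S ∪ Finset.range (M+1), (M.choose k : ℝ) * x^k * y^(M-k)
      = ∑ k ∈ Finset.range (M+1), (M.choose k : ℝ) * x^k * y^(M-k) := by
    refine (Finset.sum_subset Finset.subset_union_right ?_).symm
    intro k _ hk
    have : M < k := by simp [Finset.mem_range] at hk; omega
    rw [Nat.choose_eq_zero_of_lt this]; simp
  linarith

lemma chernoff_upper (M : ℕ) (x t a : ℝ) (hx0 : 0 ≤ x) (hx1 : x ≤ 1)
    (ht : 0 ≤ t) (S : Finset ℕ) (hS : ∀ k ∈ S, a ≤ (k:ℝ)) :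
    ∑ k ∈ S, (M.choose k : ℝ) * x^k * (1-x)^(M-k)
      ≤ Real.exp (-(t*a)) * (x * Real.exp t + (1-x))^M := by
  have key : ∀ k ∈ S, (M.choose k : ℝ) * x^k * (1-x)^(M-k)
      ≤ Real.exp (-(t*a)) * ((M.choose k : ℝ) * (x*Real.exp t)^k * (1-x)^(M-k)) := by
    intro k hk
    have h1 : (1:ℝ) ≤ Real.exp (t*k - t*a) := by
      rw [← Real.exp_zero]
      exact Real.exp_le_exp.mpr (by nlinarith [hS k hk])
    have h2 : (x*Real.exp t)^k = x^k * Real.exp (t*k) := by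
      rw [mul_pow, ← Real.exp_nat_mul, mul_comm (k:ℝ) t]
    rw [h2]
    have h3 : Real.exp (-(t*a)) * ((M.choose k : ℝ) * (x^k * Real.exp (t*k)) * (1-x)^(M-k))
        = ((M.choose k : ℝ) * x^k * (1-x)^(M-k)) * Real.exp (t*k - t*a) := by
      rw [Real.exp_sub, Real.exp_neg]
      field_simp
    rw [h3]
    nlinarith [mul_nonneg (mul_nonneg (Nat.cast_nonneg (M.choose k)) (pow_nonneg hx0 k))
      (pow_nonneg (by linarith : (0:ℝ) ≤ 1-x) (M-k))]
  calc ∑ k ∈ S, (M.choose k : ℝ) * x^k * (1-x)^(M-k)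
      ≤ ∑ k ∈ S, Real.exp (-(t*a)) * ((M.choose k : ℝ) * (x*Real.exp t)^k * (1-x)^(M-k)) :=
        Finset.sum_le_sum key
    _ = Real.exp (-(t*a)) * ∑ k ∈ S, (M.choose k : ℝ) * (x*Real.exp t)^k * (1-x)^(M-k) := by
        rw [Finset.mul_sum]
    _ ≤ Real.exp (-(t*a)) * (x * Real.exp t + (1-x))^M := by
        apply mul_le_mul_of_nonneg_left _ (Real.exp_nonneg _)
        exact sum_binom_le M _ _ (by positivity) (by linarith) S

lemma chernoff_lower (M : ℕ) (x t b : ℝ) (hx0 : 0 ≤ x) (hx1 : x ≤ 1)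
    (ht : 0 ≤ t) (S : Finset ℕ) (hS : ∀ k ∈ S, (k:ℝ) ≤ b) :
    ∑ k ∈ S, (M.choose k : ℝ) * x^k * (1-x)^(M-k)
      ≤ Real.exp (t*b) * (x * Real.exp (-t) + (1-x))^M := by
  have key : ∀ k ∈ S, (M.choose k : ℝ) * x^k * (1-x)^(M-k)
      ≤ Real.exp (t*b) * ((M.choose k : ℝ) * (x*Real.exp (-t))^k * (1-x)^(M-k)) := by
    intro k hk
    have h1 : (1:ℝ) ≤ Real.exp (t*b - t*k) := by
      rw [← Real.exp_zero]
      exact Real.exp_le_exp.mpr (by nlinarith [hS k hk])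
    have h2 : (x*Real.exp (-t))^k = x^k * Real.exp (-(t*k)) := by
      rw [mul_pow, ← Real.exp_nat_mul]
      ring_nf
    rw [h2]
    have h3 : Real.exp (t*b) * ((M.choose k : ℝ) * (x^k * Real.exp (-(t*k))) * (1-x)^(M-k))
        = ((M.choose k : ℝ) * x^k * (1-x)^(M-k)) * Real.exp (t*b - t*k) := by
      rw [Real.exp_sub, Real.exp_neg]
      field_simp
    rw [h3]
    nlinarith [mul_nonneg (mul_nonneg (Nat.cast_nonneg (M.choose k)) (pow_nonneg hx0 k))
      (pow_nonneg (by linarith : (0:ℝ) ≤ 1-x) (M-k))]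
  calc ∑ k ∈ S, (M.choose k : ℝ) * x^k * (1-x)^(M-k)
      ≤ ∑ k ∈ S, Real.exp (t*b) * ((M.choose k : ℝ) * (x*Real.exp (-t))^k * (1-x)^(M-k)) :=
        Finset.sum_le_sum key
    _ = Real.exp (t*b) * ∑ k ∈ S, (M.choose k : ℝ) * (x*Real.exp (-t))^k * (1-x)^(M-k) := by
        rw [Finset.mul_sum]
    _ ≤ Real.exp (t*b) * (x * Real.exp (-t) + (1-x))^M := by
        apply mul_le_mul_of_nonneg_left _ (Real.exp_nonneg _)
        exact sum_binom_le M _ _ (by positivity) (by linarith) S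


lemma tail_le {Ω : Type} [MeasurableSpace Ω] (μ : Measure Ω) [IsProbabilityMeasure μ]
    (N : Ω → ℕ) (hN : Measurable N) (M : ℕ) (f : ℕ → ℝ) (hf : ∀ k, 0 ≤ f k)
    (hpmf : ∀ k, μ {ω | N ω = k} = ENNReal.ofReal (f k))
    (htot : ∑ k ∈ Finset.range (M+1), f k = 1)
    (S : Finset ℕ) (E : Set Ω) (hE : ∀ ω ∈ E, N ω ≤ M → N ω ∈ S) :
    μ E ≤ ENNReal.ofReal (∑ k ∈ S, f k) := by
  have hlev : ∀ k : ℕ, MeasurableSet {ω | N ω = k} := fun k =>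
    hN (measurableSet_singleton k)
  have hIic : MeasurableSet {ω | N ω ≤ M} := hN measurableSet_Iic
  -- the union over range (M+1) is {N ≤ M} and has measure 1
  have hunion : {ω | N ω ≤ M} = ⋃ k ∈ Finset.range (M+1), {ω | N ω = k} := by
    ext ω
    simp [Finset.mem_range, Nat.lt_succ_iff]
  have hmeas1 : μ {ω | N ω ≤ M} = 1 := by
    rw [hunion, measure_biUnion_finset ?_ (fun k _ => hlev k)]
    · rw [Finset.sum_congr rfl (fun k _ => hpmf k),
        ← ENNReal.ofReal_sum_of_nonneg (fun k _ => hf k), htot, ENNReal.ofReal_one]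
    · intro i _ j _ hij
      simp only [Function.onFun, Set.disjoint_left]
      intro ω h1 h2
      exact hij ((h1 : N ω = i).symm.trans (h2 : N ω = j))
  have hzero : μ {ω | N ω ≤ M}ᶜ = 0 := by
    rw [prob_compl_eq_one_sub hIic, hmeas1, tsub_self]
  calc μ E ≤ μ ((E ∩ {ω | N ω ≤ M}) ∪ {ω | N ω ≤ M}ᶜ) := by
        apply measure_mono
        intro ω hω
        by_cases h : N ω ≤ M
        · exact Or.inl ⟨hω, h⟩
        · exact Or.inr h
    _ ≤ μ (E ∩ {ω | N ω ≤ M}) + μ ({ω | N ω ≤ M}ᶜ) := measure_union_le _ _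
    _ = μ (E ∩ {ω | N ω ≤ M}) := by rw [hzero, add_zero]
    _ ≤ μ (⋃ k ∈ S, {ω | N ω = k}) := by
        apply measure_mono
        rintro ω ⟨h1, h2⟩
        exact Set.mem_biUnion (hE ω h1 h2) rfl
    _ ≤ ∑ k ∈ S, μ {ω | N ω = k} := measure_biUnion_finset_le S _
    _ = ENNReal.ofReal (∑ k ∈ S, f k) := by
        rw [Finset.sum_congr rfl (fun k _ => hpmf k),
          ← ENNReal.ofReal_sum_of_nonneg (fun k _ => hf k)]


lemma exp_quad (t : ℝ) (h0 : 0 ≤ t) (h1 : t ≤ 1) : Real.exp t - 1 - t ≤ t^2 := by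
  have := Real.exp_bound (x := t) (by rwa [abs_of_nonneg h0]) (n := 2) (by norm_num)
  rw [abs_of_nonneg h0] at this
  simp [Finset.sum_range_succ] at this
  rw [abs_le] at this
  nlinarith

lemma exp_quad' (t : ℝ) (h0 : 0 ≤ t) (h1 : t ≤ 1) : Real.exp (-t) - 1 + t ≤ t^2 := by
  have := Real.exp_bound (x := -t) (by rwa [abs_neg, abs_of_nonneg h0]) (n := 2) (by norm_num)
  rw [abs_neg, abs_of_nonneg h0] at this
  simp [Finset.sum_range_succ] at this
  rw [abs_le] at this
  nlinarith

lemma mgf_upper (M : ℕ) (x t s : ℝ) (hx0 : 0 ≤ x) (hx1 : x ≤ 1)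
    (ht0 : 0 ≤ t) (ht1 : t ≤ 1) :
    Real.exp (-(t*(x*M + s))) * (x * Real.exp t + (1-x))^M
      ≤ Real.exp (M*x*t^2 - t*s) := by
  have hbase : x * Real.exp t + (1-x) ≤ Real.exp (x*(Real.exp t - 1)) := by
    have := Real.add_one_le_exp (x*(Real.exp t - 1))
    linarith [this]
  have hbase0 : (0:ℝ) ≤ x * Real.exp t + (1-x) := by
    have := Real.exp_nonneg t
    nlinarith
  have hpow : (x * Real.exp t + (1-x))^M ≤ Real.exp (M * (x*(Real.exp t - 1))) := by
    rw [Real.exp_nat_mul]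
    exact pow_le_pow_left₀ hbase0 hbase M
  calc Real.exp (-(t*(x*M + s))) * (x * Real.exp t + (1-x))^M
      ≤ Real.exp (-(t*(x*M + s))) * Real.exp (M * (x*(Real.exp t - 1))) :=
        mul_le_mul_of_nonneg_left hpow (Real.exp_nonneg _)
    _ = Real.exp (M*x*(Real.exp t - 1 - t) - t*s) := by
        rw [← Real.exp_add]; ring_nf
    _ ≤ Real.exp (M*x*t^2 - t*s) := by
        apply Real.exp_le_exp.mpr
        have h := exp_quad t ht0 ht1
        have hMx : (0:ℝ) ≤ M*x := by positivity
        nlinarith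
  
lemma mgf_lower (M : ℕ) (x t s : ℝ) (hx0 : 0 ≤ x) (hx1 : x ≤ 1)
    (ht0 : 0 ≤ t) (ht1 : t ≤ 1) :
    Real.exp (t*(x*M - s)) * (x * Real.exp (-t) + (1-x))^M
      ≤ Real.exp (M*x*t^2 - t*s) := by
  have hbase : x * Real.exp (-t) + (1-x) ≤ Real.exp (x*(Real.exp (-t) - 1)) := by
    have := Real.add_one_le_exp (x*(Real.exp (-t) - 1))
    linarith [this]
  have hbase0 : (0:ℝ) ≤ x * Real.exp (-t) + (1-x) := by
    have := Real.exp_nonneg (-t)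
    nlinarith
  have hpow : (x * Real.exp (-t) + (1-x))^M ≤ Real.exp (M * (x*(Real.exp (-t) - 1))) := by
    rw [Real.exp_nat_mul]
    exact pow_le_pow_left₀ hbase0 hbase M
  calc Real.exp (t*(x*M - s)) * (x * Real.exp (-t) + (1-x))^M
      ≤ Real.exp (t*(x*M - s)) * Real.exp (M * (x*(Real.exp (-t) - 1))) :=
        mul_le_mul_of_nonneg_left hpow (Real.exp_nonneg _)
    _ = Real.exp (M*x*(Real.exp (-t) - 1 + t) - t*s) := by
        rw [← Real.exp_add]; ring_nf
    _ ≤ Real.exp (M*x*t^2 - t*s) := by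
        apply Real.exp_le_exp.mpr
        have h := exp_quad' t ht0 ht1
        have hMx : (0:ℝ) ≤ M*x := by positivity
        nlinarith

lemma binom_htot (M : ℕ) (x : ℝ) :
    ∑ k ∈ Finset.range (M+1), (M.choose k : ℝ) * x^k * (1-x)^(M-k) = 1 := by
  rw [binom_sum_eq]
  simp

lemma binom_upper_tail {Ω : Type} [MeasurableSpace Ω] (μ : Measure Ω)
    [IsProbabilityMeasure μ] (N : Ω → ℕ) (hN : Measurable N) (M : ℕ) (x t a : ℝ)
    (hx0 : 0 ≤ x) (hx1 : x ≤ 1) (ht : 0 ≤ t)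
    (hpmf : ∀ k, μ {ω | N ω = k} =
      ENNReal.ofReal ((M.choose k : ℝ) * x^k * (1-x)^(M-k))) :
    μ {ω | a ≤ (N ω : ℝ)} ≤
      ENNReal.ofReal (Real.exp (-(t*a)) * (x * Real.exp t + (1-x))^M) := by
  have hf : ∀ k, 0 ≤ (M.choose k : ℝ) * x^k * (1-x)^(M-k) := fun k => mul_nonneg (mul_nonneg (Nat.cast_nonneg _) (pow_nonneg hx0 _)) (pow_nonneg (by linarith) _)
  refine le_trans (tail_le μ N hN M _ hf hpmf (binom_htot M x)
    (Finset.Icc ⌈a⌉₊ M) _ ?_) (ENNReal.ofReal_le_ofReal ?_)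
  · intro ω hω hωM
    rw [Finset.mem_Icc]
    exact ⟨Nat.ceil_le.mpr hω, hωM⟩
  · apply chernoff_upper M x t a hx0 hx1 ht
    intro k hk
    rw [Finset.mem_Icc] at hk
    exact le_trans (Nat.le_ceil a) (Nat.cast_le.mpr hk.1)

lemma binom_lower_tail {Ω : Type} [MeasurableSpace Ω] (μ : Measure Ω)
    [IsProbabilityMeasure μ] (N : Ω → ℕ) (hN : Measurable N) (M : ℕ) (x t b : ℝ)
    (hx0 : 0 ≤ x) (hx1 : x ≤ 1) (ht : 0 ≤ t)
    (hpmf : ∀ k, μ {ω | N ω = k} =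
      ENNReal.ofReal ((M.choose k : ℝ) * x^k * (1-x)^(M-k))) :
    μ {ω | (N ω : ℝ) ≤ b} ≤
      ENNReal.ofReal (Real.exp (t*b) * (x * Real.exp (-t) + (1-x))^M) := by
  by_cases hb : b < 0
  · have : {ω | (N ω : ℝ) ≤ b} = ∅ := by
      ext ω
      simp only [Set.mem_setOf_eq, Set.mem_empty_iff_false, iff_false, not_le]
      exact lt_of_lt_of_le hb (Nat.cast_nonneg _)
    rw [this, measure_empty]
    exact zero_le
  push_neg at hb
  have hf : ∀ k, 0 ≤ (M.choose k : ℝ) * x^k * (1-x)^(M-k) := fun k => mul_nonneg (mul_nonneg (Nat.cast_nonneg _) (pow_nonneg hx0 _)) (pow_nonneg (by linarith) _)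
  refine le_trans (tail_le μ N hN M _ hf hpmf (binom_htot M x)
    (Finset.range (⌊b⌋₊ + 1)) _ ?_) (ENNReal.ofReal_le_ofReal ?_)
  · intro ω hω _
    rw [Finset.mem_range, Nat.lt_succ_iff]
    exact Nat.le_floor hω
  · apply chernoff_lower M x t b hx0 hx1 ht
    intro k hk
    rw [Finset.mem_range, Nat.lt_succ_iff] at hk
    exact le_trans (Nat.cast_le.mpr hk) (Nat.floor_le hb)

set_option maxHeartbeats 1600000 in
/-- Influential media, minority voter, low-surprise case: if
p < (q(1+2ε) + 4c(ε−δ))/(1−2ε), then for all sufficiently large n, a minority voter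
(with N_{i,1} ~ Binomial(n(1/2+ε), q), N_{i,2} ~ Binomial(n(1/2−ε)−1, p) independent,
predicting a₂ iff N_{i,2} − N_{i,1} ≥ 2cn(ε−δ) − 1) predicts a₂ with probability at
most exp(−2√(n−1)). -/
theorem minority_voter_unsurprised (ε c δ p q : ℝ)
    (hε : ε ∈ Set.Ioo (0:ℝ) (1/2)) (hc : 0 < c)
    (hp : p ∈ Set.Ioo (0:ℝ) 1) (hq : q ∈ Set.Ioo (0:ℝ) 1)
    (hcond : p < (q * (1 + 2*ε) + 4*c*(ε - δ)) / (1 - 2*ε)) :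
    ∃ n₀ : ℕ, 2 ≤ n₀ ∧ ∀ n : ℕ, n₀ ≤ n → ∀ m1 m2 : ℕ, 1 ≤ m2 →
      (m1 : ℝ) = n * (1/2 + ε) → (m2 : ℝ) = n * (1/2 - ε) →
      ∀ (Ω : Type) [MeasurableSpace Ω] (μ : Measure Ω), IsProbabilityMeasure μ →
      ∀ N1 N2 : Ω → ℕ, Measurable N1 → Measurable N2 →
      (∀ k : ℕ, μ {ω | N1 ω = k} =
        ENNReal.ofReal (m1.choose k * q ^ k * (1 - q) ^ (m1 - k))) →
      (∀ k : ℕ, μ {ω | N2 ω = k} =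
        ENNReal.ofReal ((m2 - 1).choose k * p ^ k * (1 - p) ^ (m2 - 1 - k))) →
      IndepFun N1 N2 μ →
      μ {ω | 2*c*(n : ℝ)*(ε - δ) - 1 ≤ (N2 ω : ℝ) - (N1 ω : ℝ)} ≤
        ENNReal.ofReal (Real.exp (-2 * Real.sqrt ((n : ℝ) - 1))) := by
  obtain ⟨hε0, hε2⟩ := hε
  obtain ⟨hp0, hp1⟩ := hp
  obtain ⟨hq0, hq1⟩ := hq
  have h2ε : (0:ℝ) < 1 - 2*ε := by linarith
  have hcond' : p * (1 - 2*ε) < q * (1 + 2*ε) + 4*c*(ε - δ) :=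
    (lt_div_iff₀ h2ε).mp hcond
  set γ : ℝ := (q*(1/2+ε) + 2*c*(ε-δ) - p*(1/2-ε))/3 with hγdef
  have hγ : 0 < γ := by rw [hγdef]; linarith
  set t : ℝ := min (γ/2) 1 with htdef
  have ht0 : 0 < t := lt_min (by linarith) one_pos
  have ht1 : t ≤ 1 := min_le_right _ _
  have htγ : t ≤ γ/2 := min_le_left _ _
  set κ : ℝ := t*γ/2 with hκdef
  have hκ : 0 < κ := by rw [hκdef]; positivity
  obtain ⟨n₁, hn₁⟩ := exists_nat_ge (max ((2:ℝ)/γ) ((64/κ + 16)/κ))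
  refine ⟨max 2 n₁, le_max_left _ _, ?_⟩
  intro n hn m1 m2 hm2 hm1R hm2R Ω _ μ hprob N1 N2 hN1 hN2 hpmf1 hpmf2 _
  have hν2 : (2:ℝ) ≤ (n:ℝ) := by
    have h : (2:ℕ) ≤ n := le_trans (le_max_left 2 n₁) hn
    exact_mod_cast h
  have hν1 : (0:ℝ) ≤ (n:ℝ) - 1 := by linarith
  have hνn₁ : (n₁:ℝ) ≤ (n:ℝ) := by
    have h : n₁ ≤ n := le_trans (le_max_right 2 n₁) hn
    exact_mod_cast h
  have hνγ : (2:ℝ) ≤ γ * (n:ℝ) := by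
    have h := le_trans (le_trans (le_max_left ((2:ℝ)/γ) ((64/κ + 16)/κ)) hn₁) hνn₁
    rw [div_le_iff₀ hγ] at h
    linarith [h]
  have hνκ : 64/κ + 16 ≤ κ * (n:ℝ) := by
    have h := le_trans (le_trans (le_max_right ((2:ℝ)/γ) ((64/κ + 16)/κ)) hn₁) hνn₁
    rw [div_le_iff₀ hκ] at h
    linarith [h]
  have hMR : ((m2 - 1 : ℕ):ℝ) = (n:ℝ)*(1/2-ε) - 1 := by
    rw [Nat.cast_sub hm2, Nat.cast_one, hm2R]
  have hMν : ((m2 - 1 : ℕ):ℝ) ≤ (n:ℝ) := by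
    have h : (n:ℝ)*(1/2-ε) ≤ (n:ℝ) := by nlinarith
    rw [hMR]; linarith
  have hm1ν : (m1:ℝ) ≤ (n:ℝ) := by
    rw [hm1R]; nlinarith
  -- event inclusion
  have hincl : {ω | 2*c*(n:ℝ)*(ε - δ) - 1 ≤ (N2 ω : ℝ) - (N1 ω : ℝ)} ⊆
      {ω | p*((m2 - 1 : ℕ):ℝ) + γ*(n:ℝ) ≤ (N2 ω : ℝ)} ∪
      {ω | (N1 ω : ℝ) ≤ q*(m1:ℝ) - γ*(n:ℝ)} := by
    intro ω hω
    simp only [Set.mem_setOf_eq, Set.mem_union]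
    by_cases h1 : p*((m2 - 1 : ℕ):ℝ) + γ*(n:ℝ) ≤ (N2 ω : ℝ)
    · exact Or.inl h1
    refine Or.inr ?_
    by_contra h2
    push_neg at h1 h2
    rw [hMR] at h1
    rw [hm1R] at h2
    simp only [Set.mem_setOf_eq] at hω
    have hγν : 3*(γ*(n:ℝ)) = (q*(1/2+ε))*(n:ℝ) + (2*c*(ε-δ))*(n:ℝ)
        - (p*(1/2-ε))*(n:ℝ) := by
      rw [hγdef]; ring
    linarith [hω, h1, h2, hγν, hνγ, hp0]
  -- tail bounds
  have htail2 : μ {ω | p*((m2 - 1 : ℕ):ℝ) + γ*(n:ℝ) ≤ (N2 ω : ℝ)} ≤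
      ENNReal.ofReal (Real.exp (-(κ*(n:ℝ)))) := by
    refine le_trans (binom_upper_tail μ N2 hN2 (m2-1) p t
      (p*((m2 - 1 : ℕ):ℝ) + γ*(n:ℝ)) hp0.le hp1.le ht0.le hpmf2)
      (ENNReal.ofReal_le_ofReal ?_)
    refine le_trans (mgf_upper (m2-1) p t (γ*(n:ℝ)) hp0.le hp1.le ht0.le ht1) ?_
    apply Real.exp_le_exp.mpr
    have hc0 : (0:ℝ) ≤ ((m2 - 1 : ℕ):ℝ) := Nat.cast_nonneg _
    have hMp : ((m2 - 1 : ℕ):ℝ)*p ≤ (n:ℝ) := by nlinarith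
    have e1 : ((m2 - 1 : ℕ):ℝ)*p*t^2 ≤ (n:ℝ)*t^2 :=
      mul_le_mul_of_nonneg_right hMp (sq_nonneg t)
    have e2 : (n:ℝ)*(t*(t - γ/2)) ≤ 0 :=
      mul_nonpos_of_nonneg_of_nonpos (by linarith)
        (mul_nonpos_of_nonneg_of_nonpos ht0.le (by linarith))
    have hκn : κ*(n:ℝ) = t*γ/2*(n:ℝ) := by rw [hκdef]
    nlinarith [e1, e2, hκn]
  have htail1 : μ {ω | (N1 ω : ℝ) ≤ q*(m1:ℝ) - γ*(n:ℝ)} ≤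
      ENNReal.ofReal (Real.exp (-(κ*(n:ℝ)))) := by
    refine le_trans (binom_lower_tail μ N1 hN1 m1 q t
      (q*(m1:ℝ) - γ*(n:ℝ)) hq0.le hq1.le ht0.le hpmf1)
      (ENNReal.ofReal_le_ofReal ?_)
    refine le_trans (mgf_lower m1 q t (γ*(n:ℝ)) hq0.le hq1.le ht0.le ht1) ?_
    apply Real.exp_le_exp.mpr
    have hc0 : (0:ℝ) ≤ (m1:ℝ) := Nat.cast_nonneg _
    have hmq : (m1:ℝ)*q ≤ (n:ℝ) := by nlinarith
    have e1 : (m1:ℝ)*q*t^2 ≤ (n:ℝ)*t^2 :=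
      mul_le_mul_of_nonneg_right hmq (sq_nonneg t)
    have e2 : (n:ℝ)*(t*(t - γ/2)) ≤ 0 :=
      mul_nonpos_of_nonneg_of_nonpos (by linarith)
        (mul_nonpos_of_nonneg_of_nonpos ht0.le (by linarith))
    have hκn : κ*(n:ℝ) = t*γ/2*(n:ℝ) := by rw [hκdef]
    nlinarith [e1, e2, hκn]
  -- final comparison
  have hfinal : 2*Real.exp (-(κ*(n:ℝ))) ≤ Real.exp (-2 * Real.sqrt ((n:ℝ) - 1)) := by
    have h2e : (2:ℝ)*Real.exp (-(κ*(n:ℝ))) = Real.exp (Real.log 2 + -(κ*(n:ℝ))) := by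
      rw [Real.exp_add, Real.exp_log two_pos]
    rw [h2e]
    apply Real.exp_le_exp.mpr
    have hu : (0:ℝ) < 8/κ := by positivity
    have huk : (8/κ)*κ = 8 := by field_simp
    have hsq : Real.sqrt ((n:ℝ)-1) ^ 2 = (n:ℝ) - 1 := Real.sq_sqrt hν1
    have hAM : 2*Real.sqrt ((n:ℝ)-1) ≤ ((n:ℝ)-1)*κ/8 + 8/κ := by
      nlinarith [sq_nonneg (Real.sqrt ((n:ℝ)-1) - 8/κ), hsq, hκ, huk,
        mul_nonneg (sq_nonneg (Real.sqrt ((n:ℝ)-1) - 8/κ)) hκ.le]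
    have hlog : Real.log 2 < 1 := by
      have := Real.log_two_lt_d9
      linarith
    have hr1 : (64:ℝ)/κ = 8*(8/κ) := by ring
    have hr2 : ((n:ℝ)-1)*κ/8 = κ*(n:ℝ)/8 - κ/8 := by ring
    linarith [hAM, hνκ, hκ, hlog, hu, hr1, hr2]
  calc μ {ω | 2*c*(n:ℝ)*(ε - δ) - 1 ≤ (N2 ω : ℝ) - (N1 ω : ℝ)}
      ≤ μ ({ω | p*((m2 - 1 : ℕ):ℝ) + γ*(n:ℝ) ≤ (N2 ω : ℝ)} ∪
          {ω | (N1 ω : ℝ) ≤ q*(m1:ℝ) - γ*(n:ℝ)}) := measure_mono hincl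
    _ ≤ μ {ω | p*((m2 - 1 : ℕ):ℝ) + γ*(n:ℝ) ≤ (N2 ω : ℝ)} +
        μ {ω | (N1 ω : ℝ) ≤ q*(m1:ℝ) - γ*(n:ℝ)} := measure_union_le _ _
    _ ≤ ENNReal.ofReal (Real.exp (-(κ*(n:ℝ)))) +
        ENNReal.ofReal (Real.exp (-(κ*(n:ℝ)))) := add_le_add htail2 htail1
    _ = ENNReal.ofReal (2*Real.exp (-(κ*(n:ℝ)))) := by
        rw [← ENNReal.ofReal_add (Real.exp_nonneg _) (Real.exp_nonneg _)]
        ring_nf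
    _ ≤ ENNReal.ofReal (Real.exp (-2 * Real.sqrt ((n:ℝ) - 1))) :=
        ENNReal.ofReal_le_ofReal hfinal
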